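/- arXiv:1806.04998 — 4 statements merged into one kernel-verified Lean document; each statement's English description precedes it below -/
import Mathlib

section
/- For $0 < H < 1/2$ and $T > 0$, if $f \in L^2([0,T])$, then the function $t \mapsto t^{2H-1}\left(\int_0^t (t-u)^{-1/2-H} u^{1/2-H} f(u)\,du\right)^2$ is integrable on $[0,T]$, and moreover $\int_0^T t^{2H-1}\left(\int_0^t (t-u)^{-1/2-H} u^{1/2-H} f(u)\,du\right)^2 dt \le C \int_0^T f(t)^2\,dt$ for a constant $C$ depending only on $H$ and $T$. -/
open MeasureTheory Set
open scoped ENNReal NNReal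

lemma rint (H : ℝ) (hH0 : 0 < H) (hH : H < 1/2) {c : ℝ} (hc : 0 ≤ c) :
    ∫ x in (0:ℝ)..c, x ^ (-(1/2) - H) = c ^ (1/2 - H) / (1/2 - H) := by
  rw [integral_rpow (Or.inl (by linarith))]
  rw [Real.zero_rpow (by norm_num; linarith)]
  norm_num
  rw [show -(1/2) - H + 1 = 1/2 - H by ring]

-- kernel lintegral, forward orientation: ∫⁻ x in Ioc a b, (x-a)^α ≤ K
lemma kern_fwd (H T : ℝ) (hH0 : 0 < H) (hH : H < 1/2) (hT : 0 < T)
    {a b : ℝ} (hab : a ≤ b) (hbT : b - a ≤ T) :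
    ∫⁻ x in Ioc a b, ENNReal.ofReal ((x - a) ^ (-(1/2) - H)) ≤
      ENNReal.ofReal (T ^ (1/2 - H) / (1/2 - H)) := by
  have hint : IntervalIntegrable (fun x => (x - a) ^ (-(1/2) - H)) volume a b := by
    have := (intervalIntegral.intervalIntegrable_rpow' (a := 0) (b := b - a)
      (r := -(1/2) - H) (by linarith)).comp_sub_right a
    simpa using this
  have hIO : IntegrableOn (fun x => (x - a) ^ (-(1/2) - H)) (Ioc a b) volume := by
    rwa [intervalIntegrable_iff_integrableOn_Ioc_of_le hab] at hint
  have hnn : ∀ᵐ x ∂(volume.restrict (Ioc a b)), 0 ≤ (x - a) ^ (-(1/2) - H) := by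
    filter_upwards [ae_restrict_mem measurableSet_Ioc] with x hx
    exact Real.rpow_nonneg (by linarith [hx.1]) _
  rw [← ofReal_integral_eq_lintegral_ofReal hIO hnn]
  apply ENNReal.ofReal_le_ofReal
  have : ∫ x in Ioc a b, (x - a) ^ (-(1/2) - H) = ∫ x in a..b, (x - a) ^ (-(1/2) - H) := by
    rw [intervalIntegral.integral_of_le hab]
  rw [this, intervalIntegral.integral_comp_sub_right (fun x => x ^ (-(1/2) - H)) a]
  rw [sub_self, rint H hH0 hH (by linarith)]
  have hβ : 0 < 1/2 - H := by linarith
  exact (div_le_div_iff_of_pos_right hβ).mpr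
    (Real.rpow_le_rpow (by linarith) (by linarith) hβ.le)

-- reverse orientation: ∫⁻ u in Ioc a b, (b-u)^α ≤ K
lemma kern_rev (H T : ℝ) (hH0 : 0 < H) (hH : H < 1/2) (hT : 0 < T)
    {a b : ℝ} (hab : a ≤ b) (hbT : b - a ≤ T) :
    ∫⁻ u in Ioc a b, ENNReal.ofReal ((b - u) ^ (-(1/2) - H)) ≤
      ENNReal.ofReal (T ^ (1/2 - H) / (1/2 - H)) := by
  have hint : IntervalIntegrable (fun u => (b - u) ^ (-(1/2) - H)) volume a b := by
    have := (intervalIntegral.intervalIntegrable_rpow' (a := b - b) (b := b - a)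
      (r := -(1/2) - H) (by linarith)).comp_sub_left b
    simpa using this.symm
  have hIO : IntegrableOn (fun u => (b - u) ^ (-(1/2) - H)) (Ioc a b) volume := by
    rwa [intervalIntegrable_iff_integrableOn_Ioc_of_le hab] at hint
  have hnn : ∀ᵐ u ∂(volume.restrict (Ioc a b)), 0 ≤ (b - u) ^ (-(1/2) - H) := by
    filter_upwards [ae_restrict_mem measurableSet_Ioc] with u hu
    exact Real.rpow_nonneg (by linarith [hu.2]) _
  rw [← ofReal_integral_eq_lintegral_ofReal hIO hnn]
  apply ENNReal.ofReal_le_ofReal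
  have : ∫ u in Ioc a b, (b - u) ^ (-(1/2) - H) = ∫ u in a..b, (b - u) ^ (-(1/2) - H) := by
    rw [intervalIntegral.integral_of_le hab]
  rw [this, intervalIntegral.integral_comp_sub_left (fun x => x ^ (-(1/2) - H)) b]
  rw [sub_self, rint H hH0 hH (by linarith)]
  have hβ : 0 < 1/2 - H := by linarith
  exact (div_le_div_iff_of_pos_right hβ).mpr
    (Real.rpow_le_rpow (by linarith) (by linarith) hβ.le)

lemma meas_inner (H : ℝ) (f' : ℝ → ℝ) (hf' : StronglyMeasurable f') :
    StronglyMeasurable (fun t : ℝ =>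
      ∫ u in Ioc (0:ℝ) t, (t - u) ^ (-(1/2) - H) * u ^ (1/2 - H) * f' u) := by
  have hset : MeasurableSet {p : ℝ × ℝ | p.2 ∈ Ioc 0 p.1} := by
    apply MeasurableSet.inter
    · exact measurableSet_lt measurable_const measurable_snd
    · exact measurableSet_le measurable_snd measurable_fst
  have hF : StronglyMeasurable (fun p : ℝ × ℝ =>
      {p : ℝ × ℝ | p.2 ∈ Ioc 0 p.1}.indicator
        (fun p : ℝ × ℝ => (p.1 - p.2) ^ (-(1/2) - H) * p.2 ^ (1/2 - H) * f' p.2) p) := by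
    apply StronglyMeasurable.indicator _ hset
    apply Measurable.stronglyMeasurable
    exact (((measurable_fst.sub measurable_snd).pow measurable_const).mul
      (measurable_snd.pow measurable_const)).mul (hf'.measurable.comp measurable_snd)
  have hSM := hF.integral_prod_right' (ν := volume)
  have heq : (fun t : ℝ => ∫ u, {p : ℝ × ℝ | p.2 ∈ Ioc 0 p.1}.indicator
        (fun p : ℝ × ℝ => (p.1 - p.2) ^ (-(1/2) - H) * p.2 ^ (1/2 - H) * f' p.2) (t, u)) =
      (fun t : ℝ => ∫ u in Ioc (0:ℝ) t, (t - u) ^ (-(1/2) - H) * u ^ (1/2 - H) * f' u) := by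
    funext t
    rw [← integral_indicator measurableSet_Ioc]
    rfl
  rw [← heq]
  exact hSM

/-- The weighted left-sided fractional operator
`f ↦ t^(H-1/2) · ∫_0^t (t-u)^(-1/2-H) u^(1/2-H) f(u) du` is bounded on `L²([0,T])`:
the squared image (with weight `t^(2H-1)`) is integrable and its integral is bounded
by a constant (depending only on `H` and `T`) times `∫_0^T f(t)² dt`. -/
theorem stmt_0 (H T : ℝ) (hH0 : 0 < H) (hH : H < 1/2) (hT : 0 < T) :
    ∃ C : ℝ, ∀ f : ℝ → ℝ,
      IntegrableOn (fun t => (f t) ^ 2) (Ioc 0 T) volume →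
      IntegrableOn
        (fun t => t ^ (2*H - 1) *
          (∫ u in Ioc (0:ℝ) t, (t - u) ^ (-(1/2) - H) * u ^ (1/2 - H) * f u) ^ 2)
        (Ioc 0 T) volume ∧
      (∫ t in Ioc (0:ℝ) T, t ^ (2*H - 1) *
          (∫ u in Ioc (0:ℝ) t, (t - u) ^ (-(1/2) - H) * u ^ (1/2 - H) * f u) ^ 2)
        ≤ C * ∫ t in Ioc (0:ℝ) T, (f t) ^ 2 := by
  have hβ : (0:ℝ) < 1/2 - H := by linarith
  set K := T ^ (1/2 - H) / (1/2 - H) with hKdef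
  have hK0 : 0 ≤ K := div_nonneg (Real.rpow_nonneg hT.le _) hβ.le
  refine ⟨K * K, fun f hf2 => ?_⟩
  have hf2_nn : 0 ≤ ∫ u in Ioc (0:ℝ) T, f u ^ 2 :=
    integral_nonneg fun u => sq_nonneg _
  obtain ⟨q, hq_sm, hq_ae⟩ : ∃ q, StronglyMeasurable q ∧
      (fun t => f t ^ 2) =ᵐ[volume.restrict (Ioc (0:ℝ) T)] q :=
    ⟨hf2.1.mk _, hf2.1.stronglyMeasurable_mk, hf2.1.ae_eq_mk⟩
  set h : ℝ → ℝ≥0∞ := fun u => ENNReal.ofReal (q u) ^ (1/2 : ℝ) with hh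
  have hhm : Measurable h :=
    (ENNReal.measurable_ofReal.comp hq_sm.measurable).pow measurable_const
  have hh_nt : ∀ u, h u ≠ ⊤ := fun u =>
    ENNReal.rpow_ne_top_of_nonneg (by norm_num) ENNReal.ofReal_ne_top
  have hh2 : ∀ u, h u ^ 2 = ENNReal.ofReal (q u) := fun u => by
    rw [hh, ← ENNReal.rpow_two, ← ENNReal.rpow_mul]; norm_num
  have hfh : ∀ᵐ u ∂volume.restrict (Ioc (0:ℝ) T), (‖f u‖₊ : ℝ≥0∞) = h u := by
    filter_upwards [hq_ae] with u hu
    simp only [hh, ← hu]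
    rw [← enorm_eq_nnnorm, Real.enorm_eq_ofReal_abs, show f u ^ 2 = |f u| ^ 2 by rw [sq_abs],
      ENNReal.ofReal_pow (abs_nonneg _), ← ENNReal.rpow_two, ← ENNReal.rpow_mul]
    norm_num
  set φ : ℝ → ℝ := fun t => t ^ (2*H - 1) *
      (∫ u in Ioc (0:ℝ) t, (t - u) ^ (-(1/2) - H) * u ^ (1/2 - H) * f u) ^ 2 with hφ
  set B : ℝ → ℝ≥0∞ := fun t =>
      ∫⁻ u in Ioc (0:ℝ) t, ENNReal.ofReal ((t - u) ^ (-(1/2) - H)) * h u ^ 2 with hB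
  have chain : ∀ t ∈ Ioc (0:ℝ) T, ENNReal.ofReal (φ t) ≤ ENNReal.ofReal K * B t := by
    rintro t ⟨ht0, htT⟩
    set g := ∫ u in Ioc (0:ℝ) t, (t - u) ^ (-(1/2) - H) * u ^ (1/2 - H) * f u with hgdef
    set w := ENNReal.ofReal (t ^ (H - 1/2)) with hw
    set k : ℝ → ℝ≥0∞ := fun u => ENNReal.ofReal ((t - u) ^ (-(1/2) - H)) with hk
    set G := ∫⁻ u in Ioc (0:ℝ) t, k u * h u with hG
    have hkm : Measurable k :=
      ((measurable_const.sub measurable_id).pow measurable_const).ennreal_ofReal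
    -- step 1
    have st1 : ENNReal.ofReal (φ t) = (w * (‖g‖₊ : ℝ≥0∞)) ^ 2 := by
      rw [mul_pow]
      simp only [hφ]
      rw [ENNReal.ofReal_mul (Real.rpow_nonneg ht0.le _)]
      congr 1
      · rw [hw, ← ENNReal.ofReal_pow (Real.rpow_nonneg ht0.le _)]
        congr 1
        rw [← Real.rpow_two, ← Real.rpow_mul ht0.le]
        ring_nf
      · rw [← enorm_eq_nnnorm, Real.enorm_eq_ofReal_abs, ← ENNReal.ofReal_pow (abs_nonneg _), sq_abs]
    -- step 2
    have st2 : w * (‖g‖₊ : ℝ≥0∞) ≤ G := by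
      have e1 : (‖g‖₊ : ℝ≥0∞) ≤ ∫⁻ u in Ioc (0:ℝ) t,
          (‖(t - u) ^ (-(1/2) - H) * u ^ (1/2 - H) * f u‖₊ : ℝ≥0∞) :=
        enorm_integral_le_lintegral_enorm _
      have e2 : ∫⁻ u in Ioc (0:ℝ) t,
          (‖(t - u) ^ (-(1/2) - H) * u ^ (1/2 - H) * f u‖₊ : ℝ≥0∞)
          = ∫⁻ u in Ioc (0:ℝ) t, k u * (ENNReal.ofReal (u ^ (1/2 - H)) * h u) := by
        apply lintegral_congr_ae
        filter_upwards [ae_restrict_mem measurableSet_Ioc,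
          ae_restrict_of_ae_restrict_of_subset (Ioc_subset_Ioc_right htT) hfh] with u hu hfu
        rw [nnnorm_mul, nnnorm_mul, ENNReal.coe_mul, ENNReal.coe_mul, ← enorm_eq_nnnorm, ← enorm_eq_nnnorm,
          Real.enorm_eq_ofReal (Real.rpow_nonneg (by linarith [hu.2]) _),
          Real.enorm_eq_ofReal (Real.rpow_nonneg hu.1.le _), hfu, mul_assoc]
      calc w * (‖g‖₊ : ℝ≥0∞) ≤ w * ∫⁻ u in Ioc (0:ℝ) t,
            k u * (ENNReal.ofReal (u ^ (1/2 - H)) * h u) := by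
            rw [← e2]; exact mul_le_mul_right e1 w
        _ = ∫⁻ u in Ioc (0:ℝ) t,
            w * (k u * (ENNReal.ofReal (u ^ (1/2 - H)) * h u)) :=
            (lintegral_const_mul' _ _ ENNReal.ofReal_ne_top).symm
        _ ≤ G := by
            apply lintegral_mono_ae
            filter_upwards [ae_restrict_mem measurableSet_Ioc] with u hu
            have hwc : w * ENNReal.ofReal (u ^ (1/2 - H)) ≤ 1 := by
              rw [hw, ← ENNReal.ofReal_mul (Real.rpow_nonneg ht0.le _)]
              refine ENNReal.ofReal_le_one.mpr ?_
              calc t ^ (H - 1/2) * u ^ (1/2 - H)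
                  ≤ t ^ (H - 1/2) * t ^ (1/2 - H) :=
                    mul_le_mul_of_nonneg_left
                      (Real.rpow_le_rpow hu.1.le hu.2 hβ.le)
                      (Real.rpow_nonneg ht0.le _)
                _ = 1 := by rw [← Real.rpow_add ht0]; norm_num
            calc w * (k u * (ENNReal.ofReal (u ^ (1/2 - H)) * h u))
                = (w * ENNReal.ofReal (u ^ (1/2 - H))) * (k u * h u) := by ring
              _ ≤ 1 * (k u * h u) := mul_le_mul_left hwc _
              _ = k u * h u := one_mul _
    -- step 3 : Cauchy-Schwarz
    have st3 : G ^ 2 ≤ ENNReal.ofReal K * B t := by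
      have hCS := ENNReal.lintegral_mul_le_Lp_mul_Lq (volume.restrict (Ioc (0:ℝ) t))
        (p := 2) (q := 2) Real.HolderConjugate.two_two
        (f := fun u => k u ^ (1/2 : ℝ)) (g := fun u => k u ^ (1/2 : ℝ) * h u)
        (hkm.pow measurable_const).aemeasurable
        ((hkm.pow measurable_const).mul hhm).aemeasurable
      have lhs_eq : ∫⁻ u in Ioc (0:ℝ) t,
          ((fun u => k u ^ (1/2 : ℝ)) * fun u => k u ^ (1/2 : ℝ) * h u) u
          = G := by
        apply lintegral_congr fun u => ?_
        simp only [Pi.mul_apply]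
        rw [← mul_assoc, ← sq, ← ENNReal.rpow_two, ← ENNReal.rpow_mul]
        norm_num
      have rpow1 : ∀ u : ℝ, (k u ^ (1/2 : ℝ)) ^ (2:ℝ) = k u := fun u => by
        rw [← ENNReal.rpow_mul]; norm_num
      have rpow2 : ∀ u : ℝ, (k u ^ (1/2 : ℝ) * h u) ^ (2:ℝ) = k u * h u ^ 2 := fun u => by
        rw [ENNReal.mul_rpow_of_nonneg _ _ (by norm_num : (0:ℝ) ≤ 2), ← ENNReal.rpow_mul,
          ENNReal.rpow_two]
        norm_num
      rw [lhs_eq] at hCS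
      simp only [rpow1, rpow2] at hCS
      have hA : ∫⁻ u in Ioc (0:ℝ) t, k u ≤ ENNReal.ofReal K :=
        kern_rev H T hH0 hH hT ht0.le (by linarith)
      calc G ^ 2 ≤ ((∫⁻ u in Ioc (0:ℝ) t, k u) ^ (1/(2:ℝ)) *
            (∫⁻ u in Ioc (0:ℝ) t, k u * h u ^ 2) ^ (1/(2:ℝ))) ^ 2 :=
            pow_le_pow_left' hCS 2
        _ = (∫⁻ u in Ioc (0:ℝ) t, k u) * ∫⁻ u in Ioc (0:ℝ) t, k u * h u ^ 2 := by
            rw [mul_pow, ← ENNReal.rpow_two, ← ENNReal.rpow_mul,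
              ← ENNReal.rpow_two (((∫⁻ u in Ioc (0:ℝ) t, k u * h u ^ 2)) ^ (1/(2:ℝ))),
              ← ENNReal.rpow_mul]
            norm_num
        _ ≤ ENNReal.ofReal K * B t := mul_le_mul_left hA _
    calc ENNReal.ofReal (φ t) = (w * (‖g‖₊ : ℝ≥0∞)) ^ 2 := st1
      _ ≤ G ^ 2 := pow_le_pow_left' st2 2
      _ ≤ ENNReal.ofReal K * B t := st3
  have tonelli : ∫⁻ t in Ioc (0:ℝ) T, B t ≤
      ENNReal.ofReal K * ENNReal.ofReal (∫ u in Ioc (0:ℝ) T, f u ^ 2) := by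
    set J : ℝ → ℝ → ℝ≥0∞ := fun t u =>
      (Iic t).indicator (fun v => ENNReal.ofReal ((t - v) ^ (-(1/2) - H)) * h v ^ 2) u with hJ
    have hJm : Measurable (Function.uncurry J) := by
      have : Function.uncurry J = fun p : ℝ × ℝ =>
          {p : ℝ × ℝ | p.2 ≤ p.1}.indicator
            (fun p : ℝ × ℝ => ENNReal.ofReal ((p.1 - p.2) ^ (-(1/2) - H)) * h p.2 ^ 2) p := by
        funext p
        simp only [Function.uncurry, hJ, indicator_apply, mem_Iic, mem_setOf_eq]
      rw [this]
      apply Measurable.indicator _ (measurableSet_le measurable_snd measurable_fst)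
      exact ((measurable_fst.sub measurable_snd).pow measurable_const).ennreal_ofReal.mul
        ((hhm.comp measurable_snd).pow_const 2)
    have hBJ : ∀ t ∈ Ioc (0:ℝ) T, B t = ∫⁻ u in Ioc (0:ℝ) T, J t u := by
      rintro t ⟨ht0, htT⟩
      rw [hB]
      simp only [hJ]
      rw [lintegral_indicator measurableSet_Iic,
        Measure.restrict_restrict measurableSet_Iic]
      congr 1
      rw [show Iic t ∩ Ioc (0:ℝ) T = Ioc 0 t by
        ext u; simp only [mem_inter_iff, mem_Iic, mem_Ioc]
        constructor
        · rintro ⟨h1, h2, h3⟩; exact ⟨h2, h1⟩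
        · rintro ⟨h1, h2⟩; exact ⟨h2, h1, h2.trans htT⟩]
    have step1 : ∫⁻ t in Ioc (0:ℝ) T, B t
        = ∫⁻ u in Ioc (0:ℝ) T, ∫⁻ t in Ioc (0:ℝ) T, J t u := by
      rw [← lintegral_lintegral_swap hJm.aemeasurable]
      apply lintegral_congr_ae
      filter_upwards [ae_restrict_mem measurableSet_Ioc] with t ht using hBJ t ht
    have step2 : ∀ u ∈ Ioc (0:ℝ) T,
        ∫⁻ t in Ioc (0:ℝ) T, J t u ≤ ENNReal.ofReal K * h u ^ 2 := by
      rintro u ⟨hu0, huT⟩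
      have hJu : ∀ t : ℝ, J t u =
          (Ici u).indicator (fun t => ENNReal.ofReal ((t - u) ^ (-(1/2) - H)) * h u ^ 2) t := by
        intro t
        simp only [hJ, indicator_apply, mem_Iic, mem_Ici]
      simp only [hJu]
      rw [lintegral_indicator measurableSet_Ici,
        Measure.restrict_restrict measurableSet_Ici]
      rw [show Ici u ∩ Ioc (0:ℝ) T = Icc u T by
        ext t; simp only [mem_inter_iff, mem_Ici, mem_Ioc, mem_Icc]
        constructor
        · rintro ⟨h1, _, h3⟩; exact ⟨h1, h3⟩
        · rintro ⟨h1, h2⟩; exact ⟨h1, hu0.trans_le h1, h2⟩]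
      rw [lintegral_mul_const' _ _ (ENNReal.pow_ne_top (hh_nt u))]
      refine mul_le_mul_left ?_ _
      rw [← Measure.restrict_congr_set Ioc_ae_eq_Icc]
      exact kern_fwd H T hH0 hH hT huT (by linarith)
    calc ∫⁻ t in Ioc (0:ℝ) T, B t
        = ∫⁻ u in Ioc (0:ℝ) T, ∫⁻ t in Ioc (0:ℝ) T, J t u := step1
      _ ≤ ∫⁻ u in Ioc (0:ℝ) T, ENNReal.ofReal K * h u ^ 2 := by
          apply lintegral_mono_ae
          filter_upwards [ae_restrict_mem measurableSet_Ioc] with u hu using step2 u hu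
      _ = ENNReal.ofReal K * ∫⁻ u in Ioc (0:ℝ) T, h u ^ 2 :=
          lintegral_const_mul' _ _ ENNReal.ofReal_ne_top
      _ = ENNReal.ofReal K * ENNReal.ofReal (∫ u in Ioc (0:ℝ) T, f u ^ 2) := by
          congr 1
          rw [ofReal_integral_eq_lintegral_ofReal hf2
            (ae_of_all _ fun u => sq_nonneg (f u))]
          apply lintegral_congr_ae
          filter_upwards [hq_ae] with u hu
          rw [hh2 u, ← hu]
  have main : ∫⁻ t in Ioc (0:ℝ) T, ENNReal.ofReal (φ t) ≤
      ENNReal.ofReal (K * K * ∫ u in Ioc (0:ℝ) T, f u ^ 2) := by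
    calc ∫⁻ t in Ioc (0:ℝ) T, ENNReal.ofReal (φ t)
        ≤ ∫⁻ t in Ioc (0:ℝ) T, ENNReal.ofReal K * B t := by
          apply lintegral_mono_ae
          filter_upwards [ae_restrict_mem measurableSet_Ioc] with t ht using chain t ht
      _ = ENNReal.ofReal K * ∫⁻ t in Ioc (0:ℝ) T, B t :=
          lintegral_const_mul' _ _ ENNReal.ofReal_ne_top
      _ ≤ ENNReal.ofReal K * (ENNReal.ofReal K *
            ENNReal.ofReal (∫ u in Ioc (0:ℝ) T, f u ^ 2)) := mul_le_mul_right tonelli _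
      _ = ENNReal.ofReal (K * K * ∫ u in Ioc (0:ℝ) T, f u ^ 2) := by
          rw [ENNReal.ofReal_mul (mul_nonneg hK0 hK0), ENNReal.ofReal_mul hK0, mul_assoc]
  have hφ_nn_ae : 0 ≤ᵐ[volume.restrict (Ioc (0:ℝ) T)] φ := by
    filter_upwards [ae_restrict_mem measurableSet_Ioc] with t ht
    exact mul_nonneg (Real.rpow_nonneg ht.1.le _) (sq_nonneg _)
  have hφ_aesm : AEStronglyMeasurable φ (volume.restrict (Ioc (0:ℝ) T)) := by
    classical
    set S : Set ℝ := insert 0 {t | t ∈ Ioc (0:ℝ) T ∧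
        AEStronglyMeasurable f (volume.restrict (Ioc (0:ℝ) t))} with hS
    have hSne : S.Nonempty := ⟨0, mem_insert _ _⟩
    have hST : ∀ x ∈ S, x ≤ T := by
      intro x hx
      rcases mem_insert_iff.mp hx with rfl | ⟨hx1, _⟩
      exacts [hT.le, hx1.2]
    have hSbdd : BddAbove S := ⟨T, hST⟩
    set τ := sSup S with hτ
    have h_lt : ∀ t : ℝ, 0 < t → t < τ →
        AEStronglyMeasurable f (volume.restrict (Ioc (0:ℝ) t)) := by
      intro t ht0 htτ
      obtain ⟨s, hs, hts⟩ := exists_lt_of_lt_csSup hSne htτ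
      rcases mem_insert_iff.mp hs with rfl | ⟨_, hsm⟩
      · linarith
      · exact hsm.mono_measure (Measure.restrict_mono (Ioc_subset_Ioc_right hts.le) le_rfl)
    have h_gt : ∀ t, t ∈ Ioc (0:ℝ) T → τ < t →
        ¬ AEStronglyMeasurable f (volume.restrict (Ioc (0:ℝ) t)) := by
      intro t ht htτ hm
      exact absurd (le_csSup hSbdd (mem_insert_of_mem _ ⟨ht, hm⟩)) (not_le.mpr htτ)
    have hf_Ioo : AEStronglyMeasurable f (volume.restrict (Ioo (0:ℝ) τ)) := by
      obtain ⟨u, hu_mono, hu_lt, hu_tend⟩ := exists_seq_strictMono_tendsto τ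
      have hcov : Ioo (0:ℝ) τ = ⋃ n, Ioc (0:ℝ) (u n) := by
        ext x
        simp only [mem_Ioo, mem_iUnion, mem_Ioc]
        constructor
        · rintro ⟨hx0, hxτ⟩
          obtain ⟨n, hn⟩ := (hu_tend.eventually (eventually_gt_nhds hxτ)).exists
          exact ⟨n, hx0, hn.le⟩
        · rintro ⟨n, hx0, hxn⟩
          exact ⟨hx0, lt_of_le_of_lt hxn (hu_lt n)⟩
      rw [hcov, aestronglyMeasurable_iUnion_iff]
      intro n
      by_cases hn : 0 < u n
      · exact h_lt (u n) hn (hu_lt n)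
      · rw [Ioc_eq_empty (by simpa using hn), Measure.restrict_empty]
        exact aestronglyMeasurable_zero_measure f
    obtain ⟨f', hf'_sm, hff'⟩ := hf_Ioo
    have hψ_sm := meas_inner H f' hf'_sm
    set ψ : ℝ → ℝ := fun t => t ^ (2*H - 1) *
        (∫ u in Ioc (0:ℝ) t, (t - u) ^ (-(1/2) - H) * u ^ (1/2 - H) * f' u) ^ 2 with hψ
    have hψm : StronglyMeasurable ψ := by
      apply Measurable.stronglyMeasurable
      exact (measurable_id.pow measurable_const).mul (hψ_sm.measurable.pow_const 2)
    have heq : ∀ᵐ t ∂volume.restrict (Ioc (0:ℝ) T), φ t = (Iio τ).indicator ψ t := by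
      have hne : ∀ᵐ t ∂volume.restrict (Ioc (0:ℝ) T), t ≠ τ := by
        refine ae_restrict_of_ae ?_
        have hset : {t : ℝ | ¬ t ≠ τ} = {τ} := by ext x; simp
        rw [ae_iff, hset]
        exact measure_singleton τ
      filter_upwards [ae_restrict_mem measurableSet_Ioc, hne] with t ht htne
      rcases lt_trichotomy t τ with hlt | heq' | hgt
      · rw [indicator_of_mem (show t ∈ Iio τ from hlt)]
        simp only [hφ, hψ]
        have hsub : Ioc (0:ℝ) t ⊆ Ioo (0:ℝ) τ := fun v hv => ⟨hv.1, lt_of_le_of_lt hv.2 hlt⟩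
        have hieq : (∫ u in Ioc (0:ℝ) t, (t - u) ^ (-(1/2) - H) * u ^ (1/2 - H) * f u)
            = ∫ u in Ioc (0:ℝ) t, (t - u) ^ (-(1/2) - H) * u ^ (1/2 - H) * f' u := by
          apply integral_congr_ae
          filter_upwards [ae_restrict_of_ae_restrict_of_subset hsub hff'] with v hv
          rw [hv]
        rw [hieq]
      · exact absurd heq' htne
      · rw [indicator_of_notMem (show t ∉ Iio τ from not_lt.mpr hgt.le)]
        simp only [hφ]
        have hni : ¬ Integrable (fun u => (t - u) ^ (-(1/2) - H) * u ^ (1/2 - H) * f u)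
            (volume.restrict (Ioc (0:ℝ) t)) := by
          intro hint
          apply h_gt t ht hgt
          have hm2 := hint.aestronglyMeasurable
          have hmul : AEStronglyMeasurable
              (fun u => ((t - u) ^ ((1:ℝ)/2 + H) * u ^ (H - 1/2)) *
                ((t - u) ^ (-(1/2) - H) * u ^ (1/2 - H) * f u))
              (volume.restrict (Ioc (0:ℝ) t)) :=
            ((((measurable_const.sub measurable_id).pow measurable_const).mul
              (measurable_id.pow measurable_const)).stronglyMeasurable.aestronglyMeasurable).mul hm2
          apply hmul.congr
          have hne2 : ∀ᵐ v ∂volume.restrict (Ioc (0:ℝ) t), v ≠ t := by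
            refine ae_restrict_of_ae ?_
            have hset : {v : ℝ | ¬ v ≠ t} = {t} := by ext x; simp
            rw [ae_iff, hset]
            exact measure_singleton t
          filter_upwards [ae_restrict_mem measurableSet_Ioc, hne2] with v hv hv_ne
          have hvt : v < t := lt_of_le_of_ne hv.2 hv_ne
          have h1 : (0:ℝ) < t - v := by linarith
          have e1 : (t - v) ^ ((1:ℝ)/2 + H) * (t - v) ^ (-(1/2) - H) = 1 := by
            rw [← Real.rpow_add h1]; norm_num
          have e2 : v ^ (H - 1/2) * v ^ ((1:ℝ)/2 - H) = 1 := by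
            rw [← Real.rpow_add hv.1]; norm_num
          calc ((t - v) ^ ((1:ℝ)/2 + H) * v ^ (H - 1/2)) *
                ((t - v) ^ (-(1/2) - H) * v ^ (1/2 - H) * f v)
              = ((t - v) ^ ((1:ℝ)/2 + H) * (t - v) ^ (-(1/2) - H)) *
                ((v ^ (H - 1/2) * v ^ ((1:ℝ)/2 - H)) * f v) := by ring
            _ = f v := by rw [e1, e2]; ring
        rw [integral_undef hni]
        simp
    have heq' : φ =ᵐ[volume.restrict (Ioc (0:ℝ) T)] (Iio τ).indicator ψ := heq
    exact ((hψm.indicator measurableSet_Iio).aestronglyMeasurable).congr heq'.symm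
  constructor
  · refine ⟨hφ_aesm, ?_⟩
    have hnorm : ∫⁻ t in Ioc (0:ℝ) T, (‖φ t‖₊ : ℝ≥0∞)
        = ∫⁻ t in Ioc (0:ℝ) T, ENNReal.ofReal (φ t) := by
      apply lintegral_congr_ae
      filter_upwards [hφ_nn_ae] with t ht
      exact Real.enorm_eq_ofReal ht
    show (∫⁻ t in Ioc (0:ℝ) T, (‖φ t‖₊ : ℝ≥0∞)) < ⊤
    rw [hnorm]
    exact lt_of_le_of_lt main ENNReal.ofReal_lt_top
  · rw [integral_eq_lintegral_of_nonneg_ae hφ_nn_ae hφ_aesm]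
    have hmono := ENNReal.toReal_mono ENNReal.ofReal_ne_top main
    rw [ENNReal.toReal_ofReal (mul_nonneg (mul_nonneg hK0 hK0) hf2_nn)] at hmono
    exact hmono
end

section
/- For $0 < H < 1/2$ and $T > 0$, if $f \in L^2([0,T])$, then $\int_0^T t^{1-2H}\left(\int_t^T (u-t)^{-1/2-H} u^{H-1/2} f(u)\,du\right)^2 dt \le C \int_0^T f(t)^2\,dt$ for a constant $C$ depending only on $H$ and $T$; i.e., the right-sided weighted fractional operator $K_T^{H,*}$ is bounded on $L^2([0,T])$. -/
open MeasureTheory Set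
open scoped ENNReal


lemma myIntegrableOn {p a b : ℝ} (hp : -1 < p) (hab : a ≤ b) :
    IntegrableOn (fun u => (u - a) ^ p) (Ioc a b) volume := by
  have h := (intervalIntegral.intervalIntegrable_rpow' (a := 0) (b := b - a) hp).comp_sub_right a
  rw [zero_add, sub_add_cancel] at h
  exact (intervalIntegrable_iff_integrableOn_Ioc_of_le hab).mp h

lemma myKernelBound {p a b A : ℝ} (hp : -1 < p) (hab : a ≤ b)
    (hA : (b - a) ^ (p + 1) / (p + 1) ≤ A) :
    ∫⁻ u in Ioc a b, ENNReal.ofReal ((u - a) ^ p) ≤ ENNReal.ofReal A := by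
  rw [← ofReal_integral_eq_lintegral_ofReal (myIntegrableOn hp hab)
      (ae_restrict_of_forall_mem measurableSet_Ioc fun u hu =>
        Real.rpow_nonneg (by linarith [hu.1]) p)]
  refine ENNReal.ofReal_le_ofReal (le_trans (le_of_eq ?_) hA)
  rw [← intervalIntegral.integral_of_le hab,
    intervalIntegral.integral_comp_sub_right (fun x => x ^ p) a, sub_self,
    integral_rpow (Or.inl hp), Real.zero_rpow (by linarith), sub_zero]

lemma myKernelBound' {p a b A : ℝ} (hp : -1 < p) (hab : a ≤ b)
    (hA : (b - a) ^ (p + 1) / (p + 1) ≤ A) :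
    ∫⁻ t in Ioc a b, ENNReal.ofReal ((b - t) ^ p) ≤ ENNReal.ofReal A := by
  have hInt : IntegrableOn (fun t => (b - t) ^ p) (Ioc a b) volume := by
    have h := (intervalIntegral.intervalIntegrable_rpow' (a := 0) (b := b - a) hp).comp_sub_left b
    rw [sub_zero, sub_sub_cancel] at h
    exact (intervalIntegrable_iff_integrableOn_Ioc_of_le hab).mp h.symm
  rw [← ofReal_integral_eq_lintegral_ofReal hInt
      (ae_restrict_of_forall_mem measurableSet_Ioc fun t ht =>
        Real.rpow_nonneg (by linarith [ht.2]) p)]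
  refine ENNReal.ofReal_le_ofReal (le_trans (le_of_eq ?_) hA)
  rw [← intervalIntegral.integral_of_le hab,
    intervalIntegral.integral_comp_sub_left (fun x => x ^ p) b, sub_self,
    integral_rpow (Or.inl hp), Real.zero_rpow (by linarith), sub_zero]

lemma myHalfSq (x : ℝ≥0∞) : (x ^ (1/2 : ℝ)) ^ (2:ℕ) = x := by
  rw [← ENNReal.rpow_natCast (x ^ (1/2:ℝ)) 2, ← ENNReal.rpow_mul]
  norm_num

lemma myCS (μ : Measure ℝ) (K F : ℝ → ℝ≥0∞) (hK : Measurable K) (hF : Measurable F) :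
    (∫⁻ u, K u * F u ∂μ) ^ 2 ≤ (∫⁻ u, K u ∂μ) * ∫⁻ u, K u * F u ^ 2 ∂μ := by
  have h22 : (2:ℝ).HolderConjugate 2 := Real.HolderConjugate.two_two
  have hmain := ENNReal.lintegral_mul_le_Lp_mul_Lq μ h22
    ((hK.pow_const (1/2:ℝ)).aemeasurable)
    (((hK.pow_const (1/2:ℝ)).mul hF).aemeasurable)
  have e2 : ∀ x : ℝ≥0∞, (x ^ (1/2:ℝ)) ^ (2:ℝ) = x := fun x => by
    rw [← ENNReal.rpow_mul]; norm_num
  calc (∫⁻ u, K u * F u ∂μ) ^ 2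
      = (∫⁻ u, ((fun u => K u ^ (1/2:ℝ)) * fun u => K u ^ (1/2:ℝ) * F u) u ∂μ) ^ 2 := by
        congr 1
        refine lintegral_congr fun u => ?_
        simp only [Pi.mul_apply]
        rw [← mul_assoc, ← ENNReal.rpow_add_of_nonneg (1/2:ℝ) (1/2:ℝ) (by norm_num) (by norm_num)]
        norm_num
    _ ≤ ((∫⁻ u, (K u ^ (1/2:ℝ)) ^ (2:ℝ) ∂μ) ^ (1/(2:ℝ)) *
          (∫⁻ u, (K u ^ (1/2:ℝ) * F u) ^ (2:ℝ) ∂μ) ^ (1/(2:ℝ))) ^ 2 :=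
        pow_le_pow_left₀ zero_le hmain 2
    _ = _ := by
        rw [mul_pow, myHalfSq, myHalfSq]
        congr 1
        · exact lintegral_congr fun u => e2 _
        · refine lintegral_congr fun u => ?_
          rw [ENNReal.mul_rpow_of_nonneg _ _ (by norm_num : (0:ℝ) ≤ 2), e2]
          congr 1
          rw [← ENNReal.rpow_natCast (F u) 2]
          norm_num

lemma myTonelli {p A T : ℝ} (hp : -1 < p) (hT : 0 < T)
    (hA : ∀ a b : ℝ, 0 ≤ a → a ≤ b → b ≤ T → (b - a) ^ (p + 1) / (p + 1) ≤ A)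
    (F : ℝ → ℝ≥0∞) (hF : Measurable F) :
    (∫⁻ t in Ioc (0:ℝ) T, ∫⁻ u in Ioc t T, ENNReal.ofReal ((u - t) ^ p) * F u)
      ≤ ENNReal.ofReal A * ∫⁻ u in Ioc (0:ℝ) T, F u := by
  set Ψ : ℝ → ℝ → ℝ≥0∞ := fun t u => if t < u then ENNReal.ofReal ((u - t) ^ p) * F u else 0
    with hΨdef
  have hΨm : Measurable (Function.uncurry Ψ) := by
    have : Measurable fun q : ℝ × ℝ =>
        if q.1 < q.2 then ENNReal.ofReal ((q.2 - q.1) ^ p) * F q.2 else 0 :=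
      Measurable.ite (measurableSet_lt measurable_fst measurable_snd)
        (((measurable_snd.sub measurable_fst).pow_const p).ennreal_ofReal.mul
          (hF.comp measurable_snd)) measurable_const
    exact this
  have hleft : ∀ t ∈ Ioc (0:ℝ) T,
      (∫⁻ u in Ioc t T, ENNReal.ofReal ((u - t) ^ p) * F u) = ∫⁻ u in Ioc (0:ℝ) T, Ψ t u := by
    intro t ht
    have hset : Ioi t ∩ Ioc (0:ℝ) T = Ioc t T := by
      ext x
      simp only [mem_inter_iff, mem_Ioi, mem_Ioc]
      constructor
      · rintro ⟨h1, _, h3⟩; exact ⟨h1, h3⟩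
      · rintro ⟨h1, h2⟩; exact ⟨h1, ht.1.trans h1, h2⟩
    calc (∫⁻ u in Ioc t T, ENNReal.ofReal ((u - t) ^ p) * F u)
        = ∫⁻ u in Ioi t ∩ Ioc (0:ℝ) T, ENNReal.ofReal ((u - t) ^ p) * F u := by rw [hset]
      _ = ∫⁻ u in Ioc (0:ℝ) T, (Ioi t).indicator (fun u => ENNReal.ofReal ((u - t) ^ p) * F u) u := by
          rw [lintegral_indicator measurableSet_Ioi, Measure.restrict_restrict measurableSet_Ioi]
      _ = ∫⁻ u in Ioc (0:ℝ) T, Ψ t u := by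
          refine lintegral_congr fun u => ?_
          rw [hΨdef]
          simp only [indicator_apply, mem_Ioi]
  have hright : ∀ u ∈ Ioc (0:ℝ) T,
      (∫⁻ t in Ioc (0:ℝ) T, Ψ t u) ≤ ENNReal.ofReal A * F u := by
    intro u hu
    have hset : Iio u ∩ Ioc (0:ℝ) T = Ioo 0 u := by
      ext x
      simp only [mem_inter_iff, mem_Iio, mem_Ioc, mem_Ioo]
      constructor
      · rintro ⟨h1, h2, _⟩; exact ⟨h2, h1⟩
      · rintro ⟨h1, h2⟩; exact ⟨h2, h1, (h2.le.trans hu.2)⟩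
    calc (∫⁻ t in Ioc (0:ℝ) T, Ψ t u)
        = ∫⁻ t in Ioc (0:ℝ) T, (Iio u).indicator (fun t => ENNReal.ofReal ((u - t) ^ p) * F u) t := by
          refine lintegral_congr fun t => ?_
          rw [hΨdef]
          simp only [indicator_apply, mem_Iio]
      _ = ∫⁻ t in Iio u ∩ Ioc (0:ℝ) T, ENNReal.ofReal ((u - t) ^ p) * F u := by
          rw [lintegral_indicator measurableSet_Iio, Measure.restrict_restrict measurableSet_Iio]
      _ = (∫⁻ t in Ioo (0:ℝ) u, ENNReal.ofReal ((u - t) ^ p)) * F u := by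
          have hm : Measurable fun t : ℝ => ENNReal.ofReal ((u - t) ^ p) :=
            ((measurable_const.sub measurable_id).pow_const p).ennreal_ofReal
          rw [hset, lintegral_mul_const (F u) hm]
      _ ≤ ENNReal.ofReal A * F u := by
          refine mul_le_mul_left ?_ _
          rw [Measure.restrict_congr_set Ioo_ae_eq_Ioc]
          refine myKernelBound' hp hu.1.le ?_
          have := hA 0 u le_rfl hu.1.le hu.2
          simpa using this
  calc (∫⁻ t in Ioc (0:ℝ) T, ∫⁻ u in Ioc t T, ENNReal.ofReal ((u - t) ^ p) * F u)
      = ∫⁻ t in Ioc (0:ℝ) T, ∫⁻ u in Ioc (0:ℝ) T, Ψ t u :=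
        lintegral_congr_ae (ae_restrict_of_forall_mem measurableSet_Ioc hleft)
    _ = ∫⁻ u in Ioc (0:ℝ) T, ∫⁻ t in Ioc (0:ℝ) T, Ψ t u :=
        lintegral_lintegral_swap hΨm.aemeasurable
    _ ≤ ∫⁻ u in Ioc (0:ℝ) T, ENNReal.ofReal A * F u :=
        lintegral_mono_ae (ae_restrict_of_forall_mem measurableSet_Ioc hright)
    _ = ENNReal.ofReal A * ∫⁻ u in Ioc (0:ℝ) T, F u :=
        lintegral_const_mul' _ _ ENNReal.ofReal_ne_top

/-- The right-sided weighted fractional operator `K_T^{H,*}` is bounded on `L²([0,T])`: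
`∫_0^T t^(1-2H) (∫_t^T (u-t)^(-1/2-H) u^(H-1/2) f(u) du)² dt ≤ C ∫_0^T f(t)² dt`
for a constant `C` depending only on `H` and `T`. -/
theorem stmt_1 (H T : ℝ) (hH0 : 0 < H) (hH : H < 1/2) (hT : 0 < T) :
    ∃ C : ℝ, ∀ f : ℝ → ℝ,
      IntegrableOn (fun t => (f t) ^ 2) (Ioc 0 T) volume →
      (∫ t in Ioc (0:ℝ) T, t ^ (1 - 2*H) *
          (∫ u in Ioc t T, (u - t) ^ (-(1/2) - H) * u ^ (H - 1/2) * f u) ^ 2)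
        ≤ C * ∫ t in Ioc (0:ℝ) T, (f t) ^ 2 := by
  have hp : (-1:ℝ) < -(1/2) - H := by linarith
  have hp1 : (0:ℝ) < (-(1/2) - H) + 1 := by linarith
  set A : ℝ := T ^ ((-(1/2) - H) + 1) / ((-(1/2) - H) + 1) with hAdef
  have hA0 : 0 ≤ A := div_nonneg (Real.rpow_nonneg hT.le _) hp1.le
  have hAle : ∀ a b : ℝ, 0 ≤ a → a ≤ b → b ≤ T →
      (b - a) ^ ((-(1/2) - H) + 1) / ((-(1/2) - H) + 1) ≤ A := by
    intro a b ha hab hbT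
    rw [hAdef]
    have h1 : (b - a) ^ ((-(1/2) - H) + 1) ≤ T ^ ((-(1/2) - H) + 1) :=
      Real.rpow_le_rpow (by linarith) (by linarith) hp1.le
    exact div_le_div_of_nonneg_right h1 hp1.le
  refine ⟨A ^ 2, fun f hf => ?_⟩
  have hRHS : 0 ≤ ∫ t in Ioc (0:ℝ) T, f t ^ 2 :=
    setIntegral_nonneg measurableSet_Ioc fun _ _ => sq_nonneg _
  -- measurable representative of |f| on Ioc 0 T
  have habs : AEMeasurable (fun u => |f u|) (volume.restrict (Ioc 0 T)) := by
    have h2 := Real.continuous_sqrt.measurable.comp_aemeasurable hf.1.aemeasurable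
    have : ((fun x => Real.sqrt x) ∘ fun t => f t ^ 2) = fun u => |f u| := by
      ext u; simp [Function.comp, Real.sqrt_sq_eq_abs]
    rwa [this] at h2
  obtain ⟨φ0, hφ0m, hφ0eq⟩ := habs
  have hψm : Measurable fun u => |φ0 u| := hφ0m.abs
  have hψnn : ∀ u, 0 ≤ |φ0 u| := fun u => abs_nonneg _
  have hψeq : (fun u => |f u|) =ᵐ[volume.restrict (Ioc 0 T)] fun u => |φ0 u| :=
    hφ0eq.mono fun u hu => by simp only at hu ⊢; rw [← hu, abs_abs]
  by_cases hg : IntegrableOn (fun t => t ^ (1 - 2*H) *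
      (∫ u in Ioc t T, (u - t) ^ (-(1/2) - H) * u ^ (H - 1/2) * f u) ^ 2) (Ioc 0 T) volume
  swap
  · rw [integral_undef hg]
    exact mul_nonneg (sq_nonneg A) hRHS
  have hgnn : 0 ≤ᵐ[volume.restrict (Ioc 0 T)] fun t => t ^ (1 - 2*H) *
      (∫ u in Ioc t T, (u - t) ^ (-(1/2) - H) * u ^ (H - 1/2) * f u) ^ 2 :=
    ae_restrict_of_forall_mem measurableSet_Ioc fun t ht =>
      mul_nonneg (Real.rpow_nonneg ht.1.le _) (sq_nonneg _)
  rw [MeasureTheory.integral_eq_lintegral_of_nonneg_ae hgnn hg.1]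
  refine ENNReal.toReal_le_of_le_ofReal (mul_nonneg (sq_nonneg A) hRHS) ?_
  -- key pointwise estimate
  have key : ∀ t ∈ Ioc (0:ℝ) T,
      ENNReal.ofReal (t ^ (1 - 2*H) *
        (∫ u in Ioc t T, (u - t) ^ (-(1/2) - H) * u ^ (H - 1/2) * f u) ^ 2)
      ≤ ENNReal.ofReal A *
        ∫⁻ u in Ioc t T, ENNReal.ofReal ((u - t) ^ (-(1/2) - H)) * ENNReal.ofReal (|φ0 u|) ^ 2 := by
    intro t ht
    obtain ⟨ht0, htT⟩ := ht
    have hM0 : 0 ≤ ∫ u in Ioc t T, |(u - t) ^ (-(1/2) - H) * u ^ (H - 1/2) * f u| :=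
      setIntegral_nonneg measurableSet_Ioc fun _ _ => abs_nonneg _
    have hIabs : |∫ u in Ioc t T, (u - t) ^ (-(1/2) - H) * u ^ (H - 1/2) * f u|
        ≤ ∫ u in Ioc t T, |(u - t) ^ (-(1/2) - H) * u ^ (H - 1/2) * f u| := by
      simpa only [Real.norm_eq_abs] using
        norm_integral_le_integral_norm (μ := volume.restrict (Ioc t T))
          (fun u => (u - t) ^ (-(1/2) - H) * u ^ (H - 1/2) * f u)
    have step1 : ENNReal.ofReal (t ^ (1 - 2*H) *
          (∫ u in Ioc t T, (u - t) ^ (-(1/2) - H) * u ^ (H - 1/2) * f u) ^ 2)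
        ≤ ENNReal.ofReal (t ^ (1 - 2*H)) *
          ENNReal.ofReal (∫ u in Ioc t T, |(u - t) ^ (-(1/2) - H) * u ^ (H - 1/2) * f u|) ^ 2 := by
      rw [ENNReal.ofReal_mul (Real.rpow_nonneg ht0.le _), ← ENNReal.ofReal_pow hM0]
      refine mul_le_mul_right (ENNReal.ofReal_le_ofReal ?_) _
      calc (∫ u in Ioc t T, (u - t) ^ (-(1/2) - H) * u ^ (H - 1/2) * f u) ^ 2
          = |∫ u in Ioc t T, (u - t) ^ (-(1/2) - H) * u ^ (H - 1/2) * f u| ^ 2 := (sq_abs _).symm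
        _ ≤ _ := pow_le_pow_left₀ (abs_nonneg _) hIabs 2
    have step2 : ENNReal.ofReal (∫ u in Ioc t T, |(u - t) ^ (-(1/2) - H) * u ^ (H - 1/2) * f u|)
        ≤ ∫⁻ u in Ioc t T, ENNReal.ofReal (|(u - t) ^ (-(1/2) - H) * u ^ (H - 1/2) * f u|) := by
      by_cases hInt : IntegrableOn
          (fun u => |(u - t) ^ (-(1/2) - H) * u ^ (H - 1/2) * f u|) (Ioc t T) volume
      · rw [ofReal_integral_eq_lintegral_ofReal hInt
          (ae_restrict_of_forall_mem measurableSet_Ioc fun u _ => abs_nonneg _)]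
      · rw [integral_undef hInt]
        simp
    have step3 : (∫⁻ u in Ioc t T, ENNReal.ofReal (|(u - t) ^ (-(1/2) - H) * u ^ (H - 1/2) * f u|))
        ≤ ENNReal.ofReal (t ^ (H - 1/2)) *
          ∫⁻ u in Ioc t T, ENNReal.ofReal ((u - t) ^ (-(1/2) - H)) * ENNReal.ofReal (|f u|) := by
      rw [← lintegral_const_mul' _ _ ENNReal.ofReal_ne_top]
      refine lintegral_mono_ae (ae_restrict_of_forall_mem measurableSet_Ioc fun u hu => ?_)
      have hu0 : (0:ℝ) < u := ht0.trans hu.1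
      have hut : (0:ℝ) ≤ u - t := by linarith [hu.1]
      have habs' : |(u - t) ^ (-(1/2) - H) * u ^ (H - 1/2) * f u|
          = (u - t) ^ (-(1/2) - H) * u ^ (H - 1/2) * |f u| := by
        rw [abs_mul, abs_mul, abs_of_nonneg (Real.rpow_nonneg hut _),
          abs_of_nonneg (Real.rpow_nonneg hu0.le _)]
      rw [habs']
      have h1 : u ^ (H - 1/2) ≤ t ^ (H - 1/2) :=
        Real.rpow_le_rpow_of_nonpos ht0 hu.1.le (by linarith)
      have h2 : (u - t) ^ (-(1/2) - H) * u ^ (H - 1/2) * |f u|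
          ≤ t ^ (H - 1/2) * ((u - t) ^ (-(1/2) - H) * |f u|) := by
        have h3 : (u - t) ^ (-(1/2) - H) * u ^ (H - 1/2) * |f u|
            ≤ (u - t) ^ (-(1/2) - H) * t ^ (H - 1/2) * |f u| :=
          mul_le_mul_of_nonneg_right
            (mul_le_mul_of_nonneg_left h1 (Real.rpow_nonneg hut _)) (abs_nonneg _)
        calc (u - t) ^ (-(1/2) - H) * u ^ (H - 1/2) * |f u|
            ≤ (u - t) ^ (-(1/2) - H) * t ^ (H - 1/2) * |f u| := h3
          _ = t ^ (H - 1/2) * ((u - t) ^ (-(1/2) - H) * |f u|) := by ring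
      calc ENNReal.ofReal ((u - t) ^ (-(1/2) - H) * u ^ (H - 1/2) * |f u|)
          ≤ ENNReal.ofReal (t ^ (H - 1/2) * ((u - t) ^ (-(1/2) - H) * |f u|)) :=
            ENNReal.ofReal_le_ofReal h2
        _ = ENNReal.ofReal (t ^ (H - 1/2)) *
            (ENNReal.ofReal ((u - t) ^ (-(1/2) - H)) * ENNReal.ofReal (|f u|)) := by
            rw [ENNReal.ofReal_mul (Real.rpow_nonneg ht0.le _),
              ENNReal.ofReal_mul (Real.rpow_nonneg hut _)]
    have hcongr : (∫⁻ u in Ioc t T, ENNReal.ofReal ((u - t) ^ (-(1/2) - H)) * ENNReal.ofReal (|f u|))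
        = ∫⁻ u in Ioc t T, ENNReal.ofReal ((u - t) ^ (-(1/2) - H)) * ENNReal.ofReal (|φ0 u|) := by
      refine lintegral_congr_ae ?_
      have h := ae_restrict_of_ae_restrict_of_subset (Ioc_subset_Ioc_left ht0.le) hψeq
      exact h.mono fun u hu => by simp only at hu ⊢; rw [hu]
    have hKm : Measurable fun u => ENNReal.ofReal ((u - t) ^ (-(1/2) - H)) :=
      ((measurable_id.sub_const t).pow_const _).ennreal_ofReal
    have hFm : Measurable fun u : ℝ => ENNReal.ofReal (|φ0 u|) := hψm.ennreal_ofReal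
    have hCS := myCS (volume.restrict (Ioc t T)) _ _ hKm hFm
    have hker : (∫⁻ u in Ioc t T, ENNReal.ofReal ((u - t) ^ (-(1/2) - H))) ≤ ENNReal.ofReal A :=
      myKernelBound hp htT (hAle t T ht0.le htT le_rfl)
    have hone : ENNReal.ofReal (t ^ (1 - 2*H)) * ENNReal.ofReal (t ^ (H - 1/2)) ^ 2 = 1 := by
      have honeR : t ^ (1 - 2*H) * (t ^ (H - 1/2) * t ^ (H - 1/2)) = 1 := by
        rw [← Real.rpow_add ht0, ← Real.rpow_add ht0,
          show 1 - 2*H + ((H - 1/2) + (H - 1/2)) = 0 by ring, Real.rpow_zero]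
      rw [sq, ← ENNReal.ofReal_mul (Real.rpow_nonneg ht0.le _),
        ← ENNReal.ofReal_mul (Real.rpow_nonneg ht0.le _), honeR, ENNReal.ofReal_one]
    calc ENNReal.ofReal (t ^ (1 - 2*H) *
          (∫ u in Ioc t T, (u - t) ^ (-(1/2) - H) * u ^ (H - 1/2) * f u) ^ 2)
        ≤ ENNReal.ofReal (t ^ (1 - 2*H)) *
          ENNReal.ofReal (∫ u in Ioc t T, |(u - t) ^ (-(1/2) - H) * u ^ (H - 1/2) * f u|) ^ 2 := step1
      _ ≤ ENNReal.ofReal (t ^ (1 - 2*H)) *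
          (ENNReal.ofReal (t ^ (H - 1/2)) *
            ∫⁻ u in Ioc t T, ENNReal.ofReal ((u - t) ^ (-(1/2) - H)) * ENNReal.ofReal (|f u|)) ^ 2 :=
          mul_le_mul_right (pow_le_pow_left₀ zero_le (step2.trans step3) 2) _
      _ = (ENNReal.ofReal (t ^ (1 - 2*H)) * ENNReal.ofReal (t ^ (H - 1/2)) ^ 2) *
          (∫⁻ u in Ioc t T, ENNReal.ofReal ((u - t) ^ (-(1/2) - H)) * ENNReal.ofReal (|φ0 u|)) ^ 2 := by
          rw [hcongr, mul_pow]; ring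
      _ = (∫⁻ u in Ioc t T, ENNReal.ofReal ((u - t) ^ (-(1/2) - H)) * ENNReal.ofReal (|φ0 u|)) ^ 2 := by
          rw [hone, one_mul]
      _ ≤ (∫⁻ u in Ioc t T, ENNReal.ofReal ((u - t) ^ (-(1/2) - H))) *
          ∫⁻ u in Ioc t T, ENNReal.ofReal ((u - t) ^ (-(1/2) - H)) * ENNReal.ofReal (|φ0 u|) ^ 2 := hCS
      _ ≤ ENNReal.ofReal A *
          ∫⁻ u in Ioc t T, ENNReal.ofReal ((u - t) ^ (-(1/2) - H)) * ENNReal.ofReal (|φ0 u|) ^ 2 :=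
          mul_le_mul_left hker _
  have hlast : (∫⁻ u in Ioc (0:ℝ) T, ENNReal.ofReal (|φ0 u|) ^ 2)
      = ENNReal.ofReal (∫ t in Ioc (0:ℝ) T, f t ^ 2) := by
    rw [ofReal_integral_eq_lintegral_ofReal hf
      (ae_restrict_of_forall_mem measurableSet_Ioc fun t _ => sq_nonneg _)]
    refine lintegral_congr_ae (hψeq.mono fun u hu => ?_)
    simp only at hu ⊢
    rw [← ENNReal.ofReal_pow (hψnn u), ← hu, sq_abs]
  calc (∫⁻ t in Ioc (0:ℝ) T, ENNReal.ofReal (t ^ (1 - 2*H) *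
          (∫ u in Ioc t T, (u - t) ^ (-(1/2) - H) * u ^ (H - 1/2) * f u) ^ 2))
      ≤ ∫⁻ t in Ioc (0:ℝ) T, ENNReal.ofReal A *
          ∫⁻ u in Ioc t T, ENNReal.ofReal ((u - t) ^ (-(1/2) - H)) * ENNReal.ofReal (|φ0 u|) ^ 2 :=
        lintegral_mono_ae (ae_restrict_of_forall_mem measurableSet_Ioc key)
    _ = ENNReal.ofReal A * ∫⁻ t in Ioc (0:ℝ) T,
          ∫⁻ u in Ioc t T, ENNReal.ofReal ((u - t) ^ (-(1/2) - H)) * ENNReal.ofReal (|φ0 u|) ^ 2 :=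
        lintegral_const_mul' _ _ ENNReal.ofReal_ne_top
    _ ≤ ENNReal.ofReal A * (ENNReal.ofReal A * ∫⁻ u in Ioc (0:ℝ) T, ENNReal.ofReal (|φ0 u|) ^ 2) :=
        mul_le_mul_right
          (myTonelli hp hT hAle (fun u => ENNReal.ofReal (|φ0 u|) ^ 2)
            (hψm.ennreal_ofReal.pow_const 2)) _
    _ = ENNReal.ofReal (A ^ 2 * ∫ t in Ioc (0:ℝ) T, f t ^ 2) := by
        rw [hlast, ENNReal.ofReal_mul (sq_nonneg A), sq, ENNReal.ofReal_mul hA0, mul_assoc]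
end

section
/- Let $0 < H < 1/2$, $T > 0$, and define for $0 \le z < t \le T$: $\kappa(z,t) = (tz)^{1/2-H}\int_t^T (u-t)^{-1/2-H} u^{2H-1} (u-z)^{-1/2-H}\,du$. Then $\kappa(z,t) \le C\, t^{H-1/2} z^{1/2-H} (t-z)^{-2H}$ where $C = \int_0^\infty x^{-1/2-H}(x+1)^{-1/2-H}\,dx < \infty$. -/
open MeasureTheory Set

/-- Pointwise bound on the kernel `κ(z,t)` for `0 ≤ z < t ≤ T`:
`κ(z,t) ≤ C · t^(H-1/2) z^(1/2-H) (t-z)^(-2H)`, where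
`C = ∫_0^∞ x^(-1/2-H)(x+1)^(-1/2-H) dx < ∞`. -/
theorem stmt_2 (H T : ℝ) (hH0 : 0 < H) (hH : H < 1/2) (hT : 0 < T)
    (z t : ℝ) (hz : 0 ≤ z) (hzt : z < t) (htT : t ≤ T) :
    IntegrableOn (fun x : ℝ => x ^ (-(1/2) - H) * (x + 1) ^ (-(1/2) - H)) (Ioi 0) volume ∧
    (t * z) ^ (1/2 - H) *
        (∫ u in Ioc t T, (u - t) ^ (-(1/2) - H) * u ^ (2*H - 1) * (u - z) ^ (-(1/2) - H))
      ≤ (∫ x in Ioi (0:ℝ), x ^ (-(1/2) - H) * (x + 1) ^ (-(1/2) - H)) *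
          (t ^ (H - 1/2) * z ^ (1/2 - H) * (t - z) ^ (-(2*H))) := by
  set a : ℝ := -(1/2) - H with ha_def
  have ha1 : (-1 : ℝ) < a := by rw [ha_def]; linarith
  have ha0 : a ≤ 0 := by rw [ha_def]; linarith
  have ht0 : 0 < t := lt_of_le_of_lt hz hzt
  have hs : 0 < t - z := sub_pos.mpr hzt
  set s : ℝ := t - z with hs_def
  -- measurability
  have hmeas : Measurable (fun x : ℝ => x ^ a * (x + 1) ^ a) := by
    exact (measurable_id.pow_const a).mul ((measurable_id.add_const 1).pow_const a)
  -- Part 1: integrability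
  have hC : IntegrableOn (fun x : ℝ => x ^ a * (x + 1) ^ a) (Ioi 0) volume := by
    have h01 : IntegrableOn (fun x : ℝ => x ^ a * (x + 1) ^ a) (Ioc 0 1) volume := by
      have hI : IntegrableOn (fun x : ℝ => x ^ a) (Ioc 0 1) volume := by
        have := intervalIntegral.intervalIntegrable_rpow' (a := (0:ℝ)) (b := 1) ha1
        simpa [IntervalIntegrable, uIoc_of_le (zero_le_one)] using this.1
      refine Integrable.mono' hI (hmeas.aestronglyMeasurable.restrict) ?_
      filter_upwards [ae_restrict_mem measurableSet_Ioc] with x hx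
      have hx0 : 0 < x := hx.1
      rw [Real.norm_eq_abs, abs_mul, abs_of_nonneg (Real.rpow_nonneg hx0.le _),
        abs_of_nonneg (Real.rpow_nonneg (by linarith) _)]
      calc x ^ a * (x + 1) ^ a ≤ x ^ a * 1 :=
            mul_le_mul_of_nonneg_left
              (Real.rpow_le_one_of_one_le_of_nonpos (by linarith) ha0)
              (Real.rpow_nonneg hx0.le _)
        _ = x ^ a := mul_one _
    have h1i : IntegrableOn (fun x : ℝ => x ^ a * (x + 1) ^ a) (Ioi 1) volume := by
      have hI : IntegrableOn (fun x : ℝ => x ^ (a + a)) (Ioi 1) volume :=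
        integrableOn_Ioi_rpow_of_lt (by rw [ha_def]; linarith) one_pos
      refine Integrable.mono' hI (hmeas.aestronglyMeasurable.restrict) ?_
      filter_upwards [ae_restrict_mem measurableSet_Ioi] with x hx
      have hx0 : (0:ℝ) < x := lt_trans one_pos hx
      rw [Real.norm_eq_abs, abs_mul, abs_of_nonneg (Real.rpow_nonneg hx0.le _),
        abs_of_nonneg (Real.rpow_nonneg (by linarith) _), Real.rpow_add hx0]
      exact mul_le_mul_of_nonneg_left
        (Real.rpow_le_rpow_of_nonpos hx0 (by linarith) ha0)
        (Real.rpow_nonneg hx0.le _)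
    have := h01.union h1i
    rwa [Ioc_union_Ioi_eq_Ioi zero_le_one] at this
  refine ⟨hC, ?_⟩
  set C : ℝ := ∫ x in Ioi (0:ℝ), x ^ a * (x + 1) ^ a with hC_def
  set f : ℝ → ℝ := fun u => (u - t) ^ a * (u - z) ^ a with hf_def
  -- pointwise identity for the substitution
  have hsub : ∀ x ∈ Ioi (0:ℝ), f (s * x + t) = (s ^ a * s ^ a) * (x ^ a * (x + 1) ^ a) := by
    intro x hx
    have hx0 : (0:ℝ) < x := hx
    have e1 : s * x + t - t = s * x := by ring
    have e2 : s * x + t - z = s * (x + 1) := by rw [hs_def]; ring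
    rw [hf_def]
    simp only [e1, e2]
    rw [Real.mul_rpow hs.le hx0.le, Real.mul_rpow hs.le (by linarith)]
    ring
  -- translation identity
  have htrans : (∫ v in Ioi (0:ℝ), f (v + t)) = ∫ u in Ioi t, f u := by
    have := (measurePreserving_add_right volume t).setIntegral_preimage_emb
      (measurableEmbedding_addRight t) f (Ioi t)
    simpa [preimage_add_const_Ioi] using this
  -- integrability of f on Ioi t
  have hfi : IntegrableOn f (Ioi t) volume := by
    have h1 : IntegrableOn (fun x : ℝ => f (s * x + t)) (Ioi 0) volume := by
      refine IntegrableOn.congr_fun (hC.const_mul (s ^ a * s ^ a)) ?_ measurableSet_Ioi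
      intro x hx; exact (hsub x hx).symm
    have h2 : IntegrableOn (fun v : ℝ => f (v + t)) (Ioi 0) volume := by
      have := (integrableOn_Ioi_comp_mul_left_iff (fun v => f (v + t)) 0 hs).mp h1
      simpa using this
    have := ((measurePreserving_add_right volume t).integrableOn_comp_preimage
      (measurableEmbedding_addRight t) (f := f) (s := Ioi t))
    rw [← this]
    simpa [preimage_add_const_Ioi, Function.comp_def] using h2
  -- value of the integral of f on Ioi t
  have hval : (∫ u in Ioi t, f u) = s ^ (-(2*H)) * C := by
    have e1 : (∫ x in Ioi (0:ℝ), f (s * x + t)) = s⁻¹ • ∫ v in Ioi (s * 0), f (v + t) := by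
      exact integral_comp_mul_left_Ioi (fun v => f (v + t)) 0 hs
    have e2 : (∫ x in Ioi (0:ℝ), f (s * x + t)) = (s ^ a * s ^ a) * C := by
      rw [setIntegral_congr_fun measurableSet_Ioi hsub, integral_const_mul]
    rw [mul_zero] at e1
    rw [e2, htrans] at e1
    have : (∫ u in Ioi t, f u) = s * ((s ^ a * s ^ a) * C) := by
      rw [e1, smul_eq_mul, ← mul_assoc, mul_inv_cancel₀ hs.ne', one_mul]
    rw [this, ← Real.rpow_add hs, ← mul_assoc, mul_comm s,
      ← Real.rpow_add_one hs.ne']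
    congr 2
    rw [ha_def]; ring
  -- nonnegativity of f on Ioi t
  have hf_nonneg : ∀ u ∈ Ioi t, 0 ≤ f u := by
    intro u hu
    have : t < u := hu
    exact mul_nonneg (Real.rpow_nonneg (by linarith) _) (Real.rpow_nonneg (by linarith) _)
  -- Step A : pointwise bound on Ioc t T
  have hFmeas : Measurable (fun u : ℝ => (u - t) ^ a * u ^ (2*H - 1) * (u - z) ^ a) := by
    exact (((measurable_id.sub_const t).pow_const a).mul (measurable_id.pow_const (2*H-1))).mul
      ((measurable_id.sub_const z).pow_const a)
  have hgi : IntegrableOn (fun u => t ^ (2*H - 1) * f u) (Ioc t T) volume :=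
    ((hfi.mono_set Ioc_subset_Ioi_self).const_mul _)
  have hbound : ∀ u ∈ Ioc t T,
      (u - t) ^ a * u ^ (2*H - 1) * (u - z) ^ a ≤ t ^ (2*H - 1) * f u := by
    intro u hu
    have htu : t < u := hu.1
    have h1 : u ^ (2*H - 1) ≤ t ^ (2*H - 1) :=
      Real.rpow_le_rpow_of_nonpos ht0 htu.le (by linarith)
    have h2 : (0:ℝ) ≤ (u - t) ^ a := Real.rpow_nonneg (by linarith) _
    have h3 : (0:ℝ) ≤ (u - z) ^ a := Real.rpow_nonneg (by linarith) _
    calc (u - t) ^ a * u ^ (2*H - 1) * (u - z) ^ a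
        ≤ (u - t) ^ a * t ^ (2*H - 1) * (u - z) ^ a := by gcongr
      _ = t ^ (2*H - 1) * f u := by rw [hf_def]; ring
  have hFi : IntegrableOn (fun u : ℝ => (u - t) ^ a * u ^ (2*H - 1) * (u - z) ^ a)
      (Ioc t T) volume := by
    refine Integrable.mono' hgi (hFmeas.aestronglyMeasurable.restrict) ?_
    filter_upwards [ae_restrict_mem measurableSet_Ioc] with u hu
    have htu : t < u := hu.1
    rw [Real.norm_eq_abs, abs_mul, abs_mul,
      abs_of_nonneg (Real.rpow_nonneg (by linarith : (0:ℝ) ≤ u - t) _),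
      abs_of_nonneg (Real.rpow_nonneg (by linarith : (0:ℝ) ≤ u) _),
      abs_of_nonneg (Real.rpow_nonneg (by linarith : (0:ℝ) ≤ u - z) _)]
    exact hbound u hu
  have stepA : (∫ u in Ioc t T, (u - t) ^ a * u ^ (2*H - 1) * (u - z) ^ a)
      ≤ ∫ u in Ioc t T, t ^ (2*H - 1) * f u :=
    setIntegral_mono_on hFi hgi measurableSet_Ioc hbound
  have stepB : (∫ u in Ioc t T, t ^ (2*H - 1) * f u) ≤ ∫ u in Ioi t, t ^ (2*H - 1) * f u := by
    refine setIntegral_mono_set (hfi.const_mul _) ?_ (HasSubset.Subset.eventuallyLE Ioc_subset_Ioi_self)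
    filter_upwards [ae_restrict_mem measurableSet_Ioi] with u hu
    exact mul_nonneg (Real.rpow_nonneg ht0.le _) (hf_nonneg u hu)
  have hIoi : (∫ u in Ioi t, t ^ (2*H - 1) * f u) = t ^ (2*H - 1) * (s ^ (-(2*H)) * C) := by
    rw [integral_const_mul, hval]
  have hchain : (∫ u in Ioc t T, (u - t) ^ a * u ^ (2*H - 1) * (u - z) ^ a)
      ≤ t ^ (2*H - 1) * (s ^ (-(2*H)) * C) := by
    rw [← hIoi]; exact le_trans stepA stepB
  have htz : (0:ℝ) ≤ (t * z) ^ (1/2 - H) := Real.rpow_nonneg (by positivity) _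
  calc (t * z) ^ (1/2 - H) *
        (∫ u in Ioc t T, (u - t) ^ a * u ^ (2*H - 1) * (u - z) ^ a)
      ≤ (t * z) ^ (1/2 - H) * (t ^ (2*H - 1) * (s ^ (-(2*H)) * C)) := by
        exact mul_le_mul_of_nonneg_left hchain htz
    _ = C * (t ^ (H - 1/2) * z ^ (1/2 - H) * s ^ (-(2*H))) := by
        rw [Real.mul_rpow ht0.le hz]
        have ht2 : t ^ ((1:ℝ)/2 - H) * t ^ (2*H - 1) = t ^ (H - 1/2) := by
          rw [← Real.rpow_add ht0, show (1/2 - H + (2*H - 1)) = H - 1/2 by ring]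
        linear_combination (z ^ (1/2 - H) * (s ^ (-(2*H)) * C)) * ht2
    _ = C * (t ^ (H - 1/2) * z ^ (1/2 - H) * (t - z) ^ (-(2*H))) := by rw [hs_def]
end

section
/- Let $0 < H < 1/2$, $T > 0$, and let $\kappa(z,t)$ be the symmetric kernel defined by $\kappa(z,t) = (tz)^{1/2-H}\int_{\max(z,t)}^T (u-t)^{-1/2-H} u^{2H-1} (u-z)^{-1/2-H}\,du$ for $z \ne t$ in $[0,T]$. Then for every $r$ with $1 \le r < \frac{1}{2H}$, there exists a constant $C$ (depending on $H$, $T$, $r$) such that $\sup_{t \in [0,T]} \int_0^T \kappa(z,t)^r\,dz \le C$. -/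
open MeasureTheory Set

/-- The symmetric kernel
`κ(z,t) = (tz)^(1/2-H) ∫_{max(z,t)}^T (u-t)^(-1/2-H) u^(2H-1) (u-z)^(-1/2-H) du`. -/
noncomputable def kappa (H T z t : ℝ) : ℝ :=
  (t * z) ^ (1/2 - H) *
    ∫ u in Ioc (max z t) T, (u - t) ^ (-(1/2) - H) * u ^ (2*H - 1) * (u - z) ^ (-(1/2) - H)

lemma kappa_symm (H T z t : ℝ) : kappa H T z t = kappa H T t z := by
  unfold kappa
  rw [mul_comm t z, max_comm]
  congr 1
  refine setIntegral_congr_fun measurableSet_Ioc fun u _ => ?_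
  ring

lemma kappa_nonneg (H T z t : ℝ) (hz : 0 ≤ z) (ht : 0 ≤ t) : 0 ≤ kappa H T z t := by
  unfold kappa
  apply mul_nonneg (Real.rpow_nonneg (mul_nonneg ht hz) _)
  apply setIntegral_nonneg measurableSet_Ioc
  intro u hu
  have h1 : z < u := lt_of_le_of_lt (le_max_left z t) hu.1
  have h2 : t < u := lt_of_le_of_lt (le_max_right z t) hu.1
  have h3 : 0 < u := lt_of_le_of_lt hz h1
  exact mul_nonneg (mul_nonneg (Real.rpow_nonneg (by linarith) _)
    (Real.rpow_nonneg h3.le _)) (Real.rpow_nonneg (by linarith) _)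

lemma kappa_core_bound (H T : ℝ) (hH0 : 0 < H) (hH : H < 1/2) (β : ℝ)
    (hβ1 : 2*H < β) (hβ2 : β ≤ H + 1/2) {z t : ℝ} (hz : 0 < z) (hzt : z < t) (htT : t ≤ T) :
    kappa H T z t ≤ (T ^ (β - 2*H) / (β - 2*H)) * (t - z) ^ (-β) := by
  have hδ0 : 0 < β - 2*H := by linarith
  have ha0 : 0 ≤ 1/2 + H - β := by linarith
  have ht0 : 0 < t := lt_trans hz hzt
  have htz : 0 < t - z := by linarith
  have hT0 : 0 < T := lt_of_lt_of_le ht0 htT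
  have hmax : max z t = t := max_eq_right hzt.le
  -- integrability of the dominating function on the inner integral
  have hInt : IntegrableOn (fun u : ℝ => (u - t) ^ (β - 2*H - 1)) (Ioc t T) := by
    have h := (intervalIntegral.intervalIntegrable_rpow'
      (show (-1:ℝ) < β - 2*H - 1 by linarith) (a := 0) (b := T - t)).comp_sub_right t
    rw [zero_add, sub_add_cancel] at h
    exact h.1
  -- value of the inner dominating integral
  have hval : (∫ u in Ioc t T, (u - t) ^ (β - 2*H - 1))
      ≤ T ^ (β - 2*H) / (β - 2*H) := by
    rw [← intervalIntegral.integral_of_le htT,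
      intervalIntegral.integral_comp_sub_right (fun x => x ^ (β - 2*H - 1)) t, sub_self,
      integral_rpow (Or.inl (by linarith)),
      show β - 2*H - 1 + 1 = β - 2*H by ring,
      Real.zero_rpow (ne_of_gt hδ0), sub_zero]
    have hb : (T - t) ^ (β - 2*H) ≤ T ^ (β - 2*H) :=
      Real.rpow_le_rpow (by linarith) (by linarith) hδ0.le
    gcongr
  -- pointwise comparison inside the inner integral
  have hmono : (∫ u in Ioc t T, (u - t) ^ (-(1/2) - H) * u ^ (2*H - 1) * (u - z) ^ (-(1/2) - H))
      ≤ ∫ u in Ioc t T, t ^ (2*H - 1) * (t - z) ^ (-β) * (u - t) ^ (β - 2*H - 1) := by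
    apply integral_mono_of_nonneg
    · filter_upwards [ae_restrict_mem measurableSet_Ioc] with u hu
      have h1 : 0 < u - t := sub_pos.2 hu.1
      have h2 : 0 < u - z := by linarith
      have h3 : 0 < u := by linarith
      exact mul_nonneg (mul_nonneg (Real.rpow_nonneg h1.le _)
        (Real.rpow_nonneg h3.le _)) (Real.rpow_nonneg h2.le _)
    · exact (hInt.const_mul _)
    · filter_upwards [ae_restrict_mem measurableSet_Ioc] with u hu
      obtain ⟨hut, huT⟩ := hu
      have h1 : 0 < u - t := sub_pos.2 hut
      have h2 : 0 < u - z := by linarith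
      have h3 : 0 < u := by linarith
      have e1 : u ^ (2*H - 1) ≤ t ^ (2*H - 1) :=
        Real.rpow_le_rpow_of_nonpos ht0 hut.le (by linarith)
      have e2 : (u - z) ^ (-(1/2) - H)
          = (u - z) ^ (-(1/2 + H - β)) * (u - z) ^ (-β) := by
        rw [← Real.rpow_add h2]; congr 1; ring
      have e3 : (u - z) ^ (-(1/2 + H - β)) ≤ (u - t) ^ (-(1/2 + H - β)) :=
        Real.rpow_le_rpow_of_nonpos h1 (by linarith) (by linarith)
      have e4 : (u - z) ^ (-β) ≤ (t - z) ^ (-β) :=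
        Real.rpow_le_rpow_of_nonpos htz (by linarith) (by linarith)
      have n1 : (0:ℝ) ≤ (u - t) ^ (-(1/2) - H) := Real.rpow_nonneg h1.le _
      calc (u - t) ^ (-(1/2) - H) * u ^ (2*H - 1) * (u - z) ^ (-(1/2) - H)
          ≤ (u - t) ^ (-(1/2) - H) * t ^ (2*H - 1)
              * ((u - t) ^ (-(1/2 + H - β)) * (t - z) ^ (-β)) := by
            rw [e2]
            exact mul_le_mul
              (mul_le_mul le_rfl e1 (Real.rpow_nonneg h3.le _) n1)
              (mul_le_mul e3 e4 (Real.rpow_nonneg h2.le _) (Real.rpow_nonneg h1.le _))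
              (mul_nonneg (Real.rpow_nonneg h2.le _) (Real.rpow_nonneg h2.le _))
              (mul_nonneg n1 (Real.rpow_nonneg ht0.le _))
        _ = t ^ (2*H - 1) * (t - z) ^ (-β) * (u - t) ^ (β - 2*H - 1) := by
            rw [show (u - t) ^ (-(1/2) - H) * t ^ (2*H - 1)
                * ((u - t) ^ (-(1/2 + H - β)) * (t - z) ^ (-β))
                = t ^ (2*H - 1) * (t - z) ^ (-β)
                  * ((u - t) ^ (-(1/2) - H) * (u - t) ^ (-(1/2 + H - β))) from by ring,
              ← Real.rpow_add h1]
            congr 2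
            ring
  -- put everything together
  have key1 : (t * z) ^ (1/2 - H) * t ^ (2*H - 1) ≤ 1 := by
    rw [Real.mul_rpow ht0.le hz.le]
    have hzz : z ^ (1/2 - H) ≤ t ^ (1/2 - H) :=
      Real.rpow_le_rpow hz.le hzt.le (by linarith)
    calc t ^ (1/2 - H) * z ^ (1/2 - H) * t ^ (2*H - 1)
        ≤ t ^ (1/2 - H) * t ^ (1/2 - H) * t ^ (2*H - 1) := by
          exact mul_le_mul_of_nonneg_right
            (mul_le_mul_of_nonneg_left hzz (Real.rpow_nonneg ht0.le _))
            (Real.rpow_nonneg ht0.le _)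
      _ = 1 := by
          rw [← Real.rpow_add ht0, ← Real.rpow_add ht0,
            show 1/2 - H + (1/2 - H) + (2*H - 1) = (0:ℝ) by ring, Real.rpow_zero]
  have hMnn : (0:ℝ) ≤ T ^ (β - 2*H) / (β - 2*H) :=
    div_nonneg (Real.rpow_nonneg hT0.le _) hδ0.le
  have hbnn : (0:ℝ) ≤ (t - z) ^ (-β) := Real.rpow_nonneg htz.le _
  unfold kappa
  rw [hmax]
  calc (t * z) ^ (1/2 - H)
        * ∫ u in Ioc t T, (u - t) ^ (-(1/2) - H) * u ^ (2*H - 1) * (u - z) ^ (-(1/2) - H)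
      ≤ (t * z) ^ (1/2 - H)
        * (t ^ (2*H - 1) * (t - z) ^ (-β) * (T ^ (β - 2*H) / (β - 2*H))) := by
        apply mul_le_mul_of_nonneg_left _ (Real.rpow_nonneg (mul_nonneg ht0.le hz.le) _)
        calc (∫ u in Ioc t T, (u - t) ^ (-(1/2) - H) * u ^ (2*H - 1) * (u - z) ^ (-(1/2) - H))
            ≤ ∫ u in Ioc t T, t ^ (2*H - 1) * (t - z) ^ (-β) * (u - t) ^ (β - 2*H - 1) := hmono
          _ = t ^ (2*H - 1) * (t - z) ^ (-β) * ∫ u in Ioc t T, (u - t) ^ (β - 2*H - 1) := by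
              rw [integral_const_mul]
          _ ≤ t ^ (2*H - 1) * (t - z) ^ (-β) * (T ^ (β - 2*H) / (β - 2*H)) := by
              exact mul_le_mul_of_nonneg_left hval
                (mul_nonneg (Real.rpow_nonneg ht0.le _) hbnn)
    _ = ((t * z) ^ (1/2 - H) * t ^ (2*H - 1)) * ((t - z) ^ (-β) * (T ^ (β - 2*H) / (β - 2*H))) := by
        ring
    _ ≤ 1 * ((t - z) ^ (-β) * (T ^ (β - 2*H) / (β - 2*H))) :=
        mul_le_mul_of_nonneg_right key1 (mul_nonneg hbnn hMnn)
    _ = (T ^ (β - 2*H) / (β - 2*H)) * (t - z) ^ (-β) := by ring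

lemma kappa_bound (H T : ℝ) (hH0 : 0 < H) (hH : H < 1/2) (β : ℝ)
    (hβ1 : 2*H < β) (hβ2 : β ≤ H + 1/2) {z t : ℝ}
    (hz : z ∈ Ioc (0:ℝ) T) (ht : t ∈ Icc (0:ℝ) T) (hne : z ≠ t) :
    kappa H T z t ≤ (T ^ (β - 2*H) / (β - 2*H)) * |z - t| ^ (-β) := by
  have hT0 : 0 < T := lt_of_lt_of_le hz.1 hz.2
  rcases lt_or_gt_of_ne hne with h | h
  · rw [abs_of_neg (by linarith : z - t < 0), neg_sub]
    exact kappa_core_bound H T hH0 hH β hβ1 hβ2 hz.1 h ht.2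
  · rw [abs_of_pos (by linarith : 0 < z - t)]
    rcases eq_or_lt_of_le ht.1 with h0 | h0
    · have hk0 : kappa H T z t = 0 := by
        unfold kappa
        rw [← h0, zero_mul, Real.zero_rpow (by intro hc; rw [sub_eq_zero] at hc; linarith),
          zero_mul]
      rw [hk0]
      exact mul_nonneg (div_nonneg (Real.rpow_nonneg hT0.le _) (by linarith))
        (Real.rpow_nonneg (by linarith) _)
    · rw [kappa_symm]
      exact kappa_core_bound H T hH0 hH β hβ1 hβ2 h0 h hz.2

lemma abs_rpow_int (T γ t : ℝ) (hT : 0 < T) (hγ0 : 0 ≤ γ) (hγ1 : γ < 1)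
    (ht : t ∈ Icc (0:ℝ) T) :
    IntegrableOn (fun z => |z - t| ^ (-γ)) (Ioc (0:ℝ) T) ∧
      (∫ z in Ioc (0:ℝ) T, |z - t| ^ (-γ)) ≤ 2 * (T ^ (1 - γ) / (1 - γ)) := by
  have h1γ : 0 < 1 - γ := by linarith
  have hsplit : Ioc (0:ℝ) T = Ioc 0 t ∪ Ioc t T := (Ioc_union_Ioc_eq_Ioc ht.1 ht.2).symm
  have heq1 : EqOn (fun z : ℝ => (t - z) ^ (-γ)) (fun z => |z - t| ^ (-γ)) (Ioc 0 t) := by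
    intro z hz
    simp only
    rw [abs_sub_comm, abs_of_nonneg (by linarith [hz.2] : (0:ℝ) ≤ t - z)]
  have heq2 : EqOn (fun z : ℝ => (z - t) ^ (-γ)) (fun z => |z - t| ^ (-γ)) (Ioc t T) := by
    intro z hz
    simp only
    rw [abs_of_nonneg (by linarith [hz.1] : (0:ℝ) ≤ z - t)]
  have hi1' : IntegrableOn (fun z : ℝ => (t - z) ^ (-γ)) (Ioc 0 t) := by
    have h := (intervalIntegral.intervalIntegrable_rpow'
      (show (-1:ℝ) < -γ by linarith) (a := 0) (b := t)).comp_sub_left t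
    rw [sub_self, sub_zero] at h
    exact h.2
  have hi2' : IntegrableOn (fun z : ℝ => (z - t) ^ (-γ)) (Ioc t T) := by
    have h := (intervalIntegral.intervalIntegrable_rpow'
      (show (-1:ℝ) < -γ by linarith) (a := 0) (b := T - t)).comp_sub_right t
    rw [zero_add, sub_add_cancel] at h
    exact h.1
  have hi1 : IntegrableOn (fun z : ℝ => |z - t| ^ (-γ)) (Ioc 0 t) :=
    hi1'.congr_fun heq1 measurableSet_Ioc
  have hi2 : IntegrableOn (fun z : ℝ => |z - t| ^ (-γ)) (Ioc t T) :=
    hi2'.congr_fun heq2 measurableSet_Ioc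
  constructor
  · rw [hsplit]; exact hi1.union hi2
  · rw [hsplit, setIntegral_union (Ioc_disjoint_Ioc_of_le le_rfl) measurableSet_Ioc hi1 hi2]
    have hv1 : (∫ z in Ioc (0:ℝ) t, |z - t| ^ (-γ)) ≤ T ^ (1 - γ) / (1 - γ) := by
      rw [← setIntegral_congr_fun measurableSet_Ioc heq1,
        ← intervalIntegral.integral_of_le ht.1,
        intervalIntegral.integral_comp_sub_left (fun x => x ^ (-γ)) t, sub_self, sub_zero,
        integral_rpow (Or.inl (by linarith)),
        show -γ + 1 = 1 - γ by ring,
        Real.zero_rpow (ne_of_gt h1γ), sub_zero]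
      gcongr
      · exact ht.1
      · exact ht.2
    have hv2 : (∫ z in Ioc t T, |z - t| ^ (-γ)) ≤ T ^ (1 - γ) / (1 - γ) := by
      rw [← setIntegral_congr_fun measurableSet_Ioc heq2,
        ← intervalIntegral.integral_of_le ht.2,
        intervalIntegral.integral_comp_sub_right (fun x => x ^ (-γ)) t, sub_self,
        integral_rpow (Or.inl (by linarith)),
        show -γ + 1 = 1 - γ by ring,
        Real.zero_rpow (ne_of_gt h1γ), sub_zero]
      gcongr
      · linarith [ht.2]
      · linarith [ht.1]
    linarith


/-- For every `1 ≤ r < 1/(2H)` there is a constant `C` (depending on `H`, `T`, `r`)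
such that `sup_{t∈[0,T]} ∫_0^T κ(z,t)^r dz ≤ C`. -/
theorem stmt_3 (H T : ℝ) (hH0 : 0 < H) (hH : H < 1/2) (hT : 0 < T) :
    ∀ r : ℝ, 1 ≤ r → r < 1 / (2*H) →
      ∃ C : ℝ, ∀ t ∈ Icc (0:ℝ) T, (∫ z in Ioc (0:ℝ) T, (kappa H T z t) ^ r) ≤ C := by
  intro r hr1 hr2
  have hr0 : (0:ℝ) < r := lt_of_lt_of_le one_pos hr1
  have h2H : (0:ℝ) < 2*H := by linarith
  have hHr : 2*H*r < 1 := by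
    have := mul_lt_mul_of_pos_left hr2 h2H
    rw [mul_one_div, div_self (ne_of_gt h2H)] at this
    linarith [this]
  set β : ℝ := H + 1/(2*r) with hβ
  have h2r : (0:ℝ) < 2*r := by linarith
  have hOne2r : 1/(2*r) * r = 1/2 := by field_simp
  have hβ1 : 2*H < β := by
    rw [hβ]
    have : H * (2*r) < 1 := by nlinarith [hHr]
    have h' : H < 1/(2*r) := (lt_div_iff₀ h2r).2 this
    linarith
  have hβ2 : β ≤ H + 1/2 := by
    rw [hβ]
    have : 1/(2*r) ≤ 1/2 := one_div_le_one_div_of_le two_pos (by linarith)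
    linarith
  set γ : ℝ := β * r with hγ
  have hγval : γ = H*r + 1/2 := by rw [hγ, hβ, add_mul, hOne2r]
  have hγ0 : 0 ≤ γ := by rw [hγval]; nlinarith [hHr]
  have hγ1 : γ < 1 := by rw [hγval]; nlinarith [hHr]
  set M : ℝ := T ^ (β - 2*H) / (β - 2*H) with hM
  have hM0 : 0 ≤ M := div_nonneg (Real.rpow_nonneg hT.le _) (by linarith)
  refine ⟨M ^ r * (2 * (T ^ (1 - γ) / (1 - γ))), fun t ht => ?_⟩
  obtain ⟨hint, hval⟩ := abs_rpow_int T γ t hT hγ0 hγ1 ht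
  have hne : ∀ᵐ z ∂(volume.restrict (Ioc (0:ℝ) T)), z ≠ t := by
    refine ae_restrict_of_ae ?_
    have h1 : {z : ℝ | ¬ z ≠ t} = {t} := by ext z; simp
    rw [ae_iff, h1]
    exact measure_singleton t
  have hstep : (∫ z in Ioc (0:ℝ) T, (kappa H T z t) ^ r)
      ≤ ∫ z in Ioc (0:ℝ) T, M ^ r * |z - t| ^ (-γ) := by
    apply integral_mono_of_nonneg
    · filter_upwards [ae_restrict_mem measurableSet_Ioc] with z hz
      exact Real.rpow_nonneg (kappa_nonneg H T z t hz.1.le ht.1) r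
    · exact hint.const_mul _
    · filter_upwards [ae_restrict_mem measurableSet_Ioc, hne] with z hz hzt
      have hk := kappa_bound H T hH0 hH β hβ1 hβ2 hz ht hzt
      calc (kappa H T z t) ^ r
          ≤ (M * |z - t| ^ (-β)) ^ r :=
            Real.rpow_le_rpow (kappa_nonneg H T z t hz.1.le ht.1) hk hr0.le
        _ = M ^ r * |z - t| ^ (-γ) := by
            rw [Real.mul_rpow hM0 (Real.rpow_nonneg (abs_nonneg _) _),
              ← Real.rpow_mul (abs_nonneg _), neg_mul, ← hγ]
  calc (∫ z in Ioc (0:ℝ) T, (kappa H T z t) ^ r)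
      ≤ ∫ z in Ioc (0:ℝ) T, M ^ r * |z - t| ^ (-γ) := hstep
    _ = M ^ r * ∫ z in Ioc (0:ℝ) T, |z - t| ^ (-γ) := integral_const_mul _ _
    _ ≤ M ^ r * (2 * (T ^ (1 - γ) / (1 - γ))) :=
        mul_le_mul_of_nonneg_left hval (Real.rpow_nonneg hM0 r)
end
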